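/- Let G be a torsion group and R a G-graded commutative ring. Then the following are equivalent: (1) R is a pm⁺ graded ring; (2) for every multiplicatively closed S ⊆ h(R), the localization R_S is a Gelfand graded ring; (3) for every non-nilpotent homogeneous t ∈ h(R), R_t is a Gelfand graded ring; (4) for every non-nilpotent homogeneous t ∈ h(R), D_G(t) is a normal topological space. -/

import Mathlib

open DirectSum

section GradedGelfand

variable {G : Type*} [AddGroup G] [DecidableEq G] {R : Type*} [CommRing R]
variable (𝒜 : G → AddSubgroup R) [GradedRing 𝒜]

/-- A homogeneous (graded) prime ideal: a proper graded ideal that is prime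
with respect to homogeneous elements. -/
def IsGradedPrime (P : Ideal R) : Prop :=
  P.IsHomogeneous 𝒜 ∧ P ≠ ⊤ ∧
    ∀ a b : R, SetLike.IsHomogeneousElem 𝒜 a → SetLike.IsHomogeneousElem 𝒜 b →
      a * b ∈ P → a ∈ P ∨ b ∈ P

/-- A graded maximal ideal: a proper graded ideal maximal among proper graded ideals. -/
def IsGradedMaximal (M : Ideal R) : Prop :=
  M.IsHomogeneous 𝒜 ∧ M ≠ ⊤ ∧
    ∀ J : Ideal R, J.IsHomogeneous 𝒜 → M ≤ J → J ≠ ⊤ → J = M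

/-- The homogeneous prime spectrum of a graded ring. -/
def GSpec := { P : Ideal R // IsGradedPrime 𝒜 P }

/-- The Zariski topology on the homogeneous prime spectrum, generated by the basic
open sets `D_G(r)` for homogeneous `r`; the closed sets are exactly the `V_G(I)`
for graded ideals `I`. -/
instance : TopologicalSpace (GSpec 𝒜) :=
  TopologicalSpace.generateFrom
    { U | ∃ r : R, SetLike.IsHomogeneousElem 𝒜 r ∧ U = { P : GSpec 𝒜 | r ∉ P.1 } }

/-- The set of graded maximal ideals inside the homogeneous prime spectrum. -/
def GMax : Set (GSpec 𝒜) := { P | IsGradedMaximal 𝒜 P.1 }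

/-- A Gelfand graded ring: every homogeneous prime ideal is contained in a unique
graded maximal ideal. -/
def IsGelfandGraded : Prop :=
  ∀ P : Ideal R, IsGradedPrime 𝒜 P →
    ∃! M : Ideal R, IsGradedMaximal 𝒜 M ∧ P ≤ M

/-- A pm⁺ graded ring: for every homogeneous prime `P`, the homogeneous primes
containing `P` form a chain. -/
def IsPMPlusGraded : Prop :=
  ∀ P Q Q' : Ideal R, IsGradedPrime 𝒜 P → IsGradedPrime 𝒜 Q → IsGradedPrime 𝒜 Q' →
    P ≤ Q → P ≤ Q' → Q ≤ Q' ∨ Q' ≤ Q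

end GradedGelfand

section Aux
variable {ι : Type*} [AddGroup ι] [DecidableEq ι] {A : Type*} [CommRing A]
variable (ℳ : ι → AddSubgroup A) [GradedRing ℳ]

lemma decompose_mul_right_mem' {c a : A} {j : ι} (ha : a ∈ ℳ j) (e : ι) :
    (DirectSum.decompose ℳ (c * a) e : A) = (DirectSum.decompose ℳ c (e - j) : A) * a := by
  classical
  have key : ∀ i : ι, (DirectSum.decompose ℳ ((DirectSum.decompose ℳ c i : A) * a) e : A)
      = if i = e - j then (DirectSum.decompose ℳ c i : A) * a else 0 := by
    intro i
    have hmem : (DirectSum.decompose ℳ c i : A) * a ∈ ℳ (i + j) :=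
      SetLike.mul_mem_graded (SetLike.coe_mem _) ha
    by_cases hi : i = e - j
    · subst hi
      rw [if_pos rfl, DirectSum.decompose_of_mem_same ℳ (by rwa [sub_add_cancel] at hmem)]
    · rw [if_neg hi, DirectSum.decompose_of_mem_ne ℳ hmem]
      intro hij
      exact hi (eq_sub_iff_add_eq.mpr hij)
  conv_lhs => rw [← DirectSum.sum_support_decompose ℳ c, Finset.sum_mul]
  rw [DirectSum.decompose_sum, DFinsupp.finset_sum_apply, AddSubmonoidClass.coe_finset_sum]
  simp_rw [key]
  rw [Finset.sum_ite_eq' ((DirectSum.decompose ℳ c).support) (e - j)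
    (fun i => (DirectSum.decompose ℳ c i : A) * a)]
  split_ifs with h
  · rfl
  · rw [DFinsupp.notMem_support_iff.mp h]
    simp

lemma exists_homog_mem_not_mem {I P : Ideal A} (hI : I.IsHomogeneous ℳ) (h : ¬ I ≤ P) :
    ∃ a, SetLike.IsHomogeneousElem ℳ a ∧ a ∈ I ∧ a ∉ P := by
  by_contra hc
  push_neg at hc
  refine h fun x hx => ?_
  classical
  rw [← DirectSum.sum_support_decompose ℳ x]
  exact Submodule.sum_mem _ fun g _ =>
    hc _ ⟨g, SetLike.coe_mem _⟩ (hI g hx)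

lemma degree_unique {x : A} {i j : ι} (hi : x ∈ ℳ i) (hj : x ∈ ℳ j) (hx : x ≠ 0) :
    i = j := by
  by_contra hij
  exact hx ((DirectSum.decompose_of_mem_same ℳ hi).symm.trans
    (DirectSum.decompose_of_mem_ne ℳ hj (Ne.symm hij)))

lemma homog_pow {x : A} (hx : SetLike.IsHomogeneousElem ℳ x) (n : ℕ) :
    SetLike.IsHomogeneousElem ℳ (x ^ n) := by
  obtain ⟨g, hg⟩ := hx
  exact ⟨n • g, SetLike.pow_mem_graded n hg⟩

lemma mem_of_pow_mem {P : Ideal A} (hP : IsGradedPrime ℳ P) {x : A}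
    (hx : SetLike.IsHomogeneousElem ℳ x) : ∀ {n : ℕ}, n ≠ 0 → x ^ n ∈ P → x ∈ P := by
  intro n
  induction n with
  | zero => exact fun h => absurd rfl h
  | succ m ih =>
    intro _ h
    rcases hP.2.2 _ _ (homog_pow ℳ hx m) hx (by rwa [← pow_succ]) with h1 | h1
    · rcases Nat.eq_zero_or_pos m with hm | hm
      · subst hm; simp at h1
        exact absurd (Ideal.eq_top_iff_one _ |>.mpr h1) hP.2.1
      · exact ih hm.ne' h1
    · exact h1

/-- Zorn: a graded ideal avoiding a multiplicatively closed set is contained in a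
graded prime avoiding it. -/
lemma exists_gradedPrime_of_disjoint (K : Ideal A) (hK : K.IsHomogeneous ℳ)
    (T : Set A) (hmul : ∀ x ∈ T, ∀ y ∈ T, x * y ∈ T) (hne : T.Nonempty)
    (hdisj : ∀ x ∈ T, x ∉ K) :
    ∃ P : Ideal A, IsGradedPrime ℳ P ∧ K ≤ P ∧ ∀ x ∈ T, x ∉ P := by
  classical
  set s : Set (Ideal A) := {J | J.IsHomogeneous ℳ ∧ K ≤ J ∧ ∀ x ∈ T, x ∉ J} with hs
  have hchainub : ∀ c ⊆ s, IsChain (· ≤ ·) c → ∀ y ∈ c, ∃ ub ∈ s, ∀ z ∈ c, z ≤ ub := by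
    intro c hcs hchain y hy
    refine ⟨sSup c, ⟨?_, ?_, ?_⟩, fun z hz => le_sSup hz⟩
    · intro g r hr
      obtain ⟨J, hJ, hrJ⟩ := (Submodule.mem_sSup_of_directed ⟨y, hy⟩ hchain.directedOn).mp hr
      exact le_sSup hJ ((hcs hJ).1 g hrJ)
    · exact le_trans (hcs hy).2.1 (le_sSup hy)
    · intro x hx hmem
      obtain ⟨J, hJ, hxJ⟩ := (Submodule.mem_sSup_of_directed ⟨y, hy⟩ hchain.directedOn).mp hmem
      exact (hcs hJ).2.2 x hx hxJ
  obtain ⟨M, hKM, hMmax⟩ := zorn_le_nonempty₀ s hchainub K ⟨hK, le_rfl, hdisj⟩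
  obtain ⟨hMh, hKM', hMT⟩ := hMmax.1
  obtain ⟨t0, ht0⟩ := hne
  refine ⟨M, ⟨hMh, ?_, ?_⟩, hKM', hMT⟩
  · intro htop
    exact hMT t0 ht0 (htop ▸ Submodule.mem_top)
  · intro a b ha hb hab
    by_contra hcon
    push_neg at hcon
    obtain ⟨haM, hbM⟩ := hcon
    -- M ⊔ span {a} meets T
    have hmeet : ∀ x : A, SetLike.IsHomogeneousElem ℳ x → x ∉ M →
        ∃ σ ∈ T, σ ∈ M ⊔ Ideal.span {x} := by
      intro x hxh hxM
      by_contra hno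
      push_neg at hno
      have hmem : M ⊔ Ideal.span {x} ∈ s := by
        refine ⟨Ideal.IsHomogeneous.sup hMh (Ideal.homogeneous_span ℳ _ (by
          rintro y (rfl : y = x); exact hxh)), le_trans hKM' le_sup_left, ?_⟩
        intro z hz hzmem
        exact hno z hz hzmem
      exact hxM (hMmax.2 hmem le_sup_left (Submodule.mem_sup_right (Ideal.subset_span rfl)))
    obtain ⟨σ, hσT, hσ⟩ := hmeet a ha haM
    obtain ⟨σ', hσ'T, hσ'⟩ := hmeet b hb hbM
    obtain ⟨p, hp, u, hu, hσeq⟩ := Submodule.mem_sup.mp hσ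
    obtain ⟨c, hc⟩ := Ideal.mem_span_singleton'.mp hu
    obtain ⟨p', hp', u', hu', hσ'eq⟩ := Submodule.mem_sup.mp hσ'
    obtain ⟨c', hc'⟩ := Ideal.mem_span_singleton'.mp hu'
    have hexp : σ * σ' = p * (p' + c' * b) + (c * a) * p' + (c * c') * (a * b) := by
      rw [← hσeq, ← hσ'eq, ← hc, ← hc']; ring
    have : σ * σ' ∈ M := by
      rw [hexp]
      exact add_mem (add_mem (Ideal.mul_mem_right _ _ hp)
        (Ideal.mul_mem_left _ _ hp')) (Ideal.mul_mem_left _ _ hab)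
    exact hMT _ (hmul σ hσT σ' hσ'T) this

lemma exists_gradedMaximal {I : Ideal A} (hI : I.IsHomogeneous ℳ) (hne : I ≠ ⊤) :
    ∃ M : Ideal A, IsGradedMaximal ℳ M ∧ I ≤ M := by
  classical
  set s : Set (Ideal A) := {J | J.IsHomogeneous ℳ ∧ I ≤ J ∧ J ≠ ⊤} with hs
  have hchainub : ∀ c ⊆ s, IsChain (· ≤ ·) c → ∀ y ∈ c, ∃ ub ∈ s, ∀ z ∈ c, z ≤ ub := by
    intro c hcs hchain y hy
    refine ⟨sSup c, ⟨?_, le_trans (hcs hy).2.1 (le_sSup hy), ?_⟩, fun z hz => le_sSup hz⟩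
    · intro g r hr
      obtain ⟨J, hJ, hrJ⟩ := (Submodule.mem_sSup_of_directed ⟨y, hy⟩ hchain.directedOn).mp hr
      exact le_sSup hJ ((hcs hJ).1 g hrJ)
    · intro htop
      rw [Ideal.eq_top_iff_one] at htop
      obtain ⟨J, hJ, hxJ⟩ := (Submodule.mem_sSup_of_directed ⟨y, hy⟩ hchain.directedOn).mp htop
      exact (hcs hJ).2.2 (Ideal.eq_top_iff_one _ |>.mpr hxJ)
  obtain ⟨M, hIM, hMmax⟩ := zorn_le_nonempty₀ s hchainub I ⟨hI, le_rfl, hne⟩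
  exact ⟨M, ⟨hMmax.1.1, hMmax.1.2.2, fun J hJ hMJ hJne =>
    le_antisymm (hMmax.2 ⟨hJ, le_trans hIM hMJ, hJne⟩ hMJ) hMJ⟩, hIM⟩

lemma IsGradedMaximal.isGradedPrime {M : Ideal A} (hM : IsGradedMaximal ℳ M) :
    IsGradedPrime ℳ M := by
  obtain ⟨hMh, hMne, hMmax⟩ := hM
  refine ⟨hMh, hMne, fun a b ha hb hab => ?_⟩
  by_contra hcon
  push_neg at hcon
  obtain ⟨haM, hbM⟩ := hcon
  have hJ : M ⊔ Ideal.span {a} = ⊤ := by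
    by_contra hne'
    exact haM ((hMmax _ (Ideal.IsHomogeneous.sup hMh (Ideal.homogeneous_span ℳ _ (by
      rintro y (rfl : y = a); exact ha))) le_sup_left hne') ▸
      Submodule.mem_sup_right (Ideal.subset_span rfl))
  have h1 : (1 : A) ∈ M ⊔ Ideal.span {a} := hJ ▸ Submodule.mem_top
  obtain ⟨p, hp, u, hu, heq⟩ := Submodule.mem_sup.mp h1
  obtain ⟨c, hc⟩ := Ideal.mem_span_singleton'.mp hu
  have : b = p * b + c * (a * b) := by rw [← mul_assoc, hc, ← add_mul, heq, one_mul]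
  exact hbM (this ▸ add_mem (Ideal.mul_mem_right _ _ hp) (Ideal.mul_mem_left _ _ hab))

end Aux

section Topology
variable {G : Type*} [AddGroup G] [DecidableEq G] {R : Type*} [CommRing R]
variable (𝒜 : G → AddSubgroup R) [GradedRing 𝒜]

lemma isOpen_basicD {r : R} (hr : SetLike.IsHomogeneousElem 𝒜 r) :
    IsOpen {P : GSpec 𝒜 | r ∉ P.1} :=
  TopologicalSpace.GenerateOpen.basic _ ⟨r, hr, rfl⟩

lemma mem_open_of_le {P Q : GSpec 𝒜} (hPQ : P.1 ≤ Q.1) {U : Set (GSpec 𝒜)}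
    (hU : IsOpen U) (hQ : Q ∈ U) : P ∈ U := by
  have hU' : TopologicalSpace.GenerateOpen
      { U | ∃ r : R, SetLike.IsHomogeneousElem 𝒜 r ∧ U = { P : GSpec 𝒜 | r ∉ P.1 } } U := hU
  clear hU
  revert hQ
  induction hU' with
  | basic V hV => obtain ⟨r, _, rfl⟩ := hV; exact fun hQ hr => hQ (hPQ hr)
  | univ => exact fun _ => trivial
  | inter V W _ _ ihV ihW => exact fun hQ => ⟨ihV hQ.1, ihW hQ.2⟩
  | sUnion s _ ih =>
    rintro ⟨V, hVs, hQV⟩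
    exact ⟨V, hVs, ih V hVs hQV⟩

lemma isOpen_not_le {Q : Ideal R} (hQ : Q.IsHomogeneous 𝒜) :
    IsOpen {P : GSpec 𝒜 | ¬ Q ≤ P.1} := by
  have : {P : GSpec 𝒜 | ¬ Q ≤ P.1} =
      ⋃ (r : R) (_ : SetLike.IsHomogeneousElem 𝒜 r ∧ r ∈ Q), {P : GSpec 𝒜 | r ∉ P.1} := by
    ext P
    simp only [Set.mem_setOf_eq, Set.mem_iUnion]
    constructor
    · intro h
      obtain ⟨a, hah, haQ, haP⟩ := exists_homog_mem_not_mem 𝒜 hQ h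
      exact ⟨a, ⟨hah, haQ⟩, haP⟩
    · rintro ⟨r, ⟨hrh, hrQ⟩, hrP⟩ hle
      exact hrP (hle hrQ)
  rw [this]
  exact isOpen_iUnion fun r => isOpen_iUnion fun hr => isOpen_basicD 𝒜 hr.1

lemma isOpen_structure {U : Set (GSpec 𝒜)} (hU : IsOpen U) :
    ∃ I : Ideal R, I.IsHomogeneous 𝒜 ∧ U = {P : GSpec 𝒜 | ¬ I ≤ P.1} := by
  classical
  have hU' : TopologicalSpace.GenerateOpen
      { U | ∃ r : R, SetLike.IsHomogeneousElem 𝒜 r ∧ U = { P : GSpec 𝒜 | r ∉ P.1 } } U := hU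
  clear hU
  induction hU' with
  | basic V hV =>
    obtain ⟨r, hr, rfl⟩ := hV
    refine ⟨Ideal.span {r}, Ideal.homogeneous_span 𝒜 _ (by rintro y (rfl : y = r); exact hr), ?_⟩
    ext P
    simp [Ideal.span_singleton_le_iff_mem]
  | univ =>
    refine ⟨⊤, fun g r _ => Submodule.mem_top, ?_⟩
    ext P
    simp only [Set.mem_univ, true_iff, Set.mem_setOf_eq]
    exact fun h => P.2.2.1 (top_le_iff.mp h)
  | inter V W hV hW ihV ihW =>
    obtain ⟨I, hIh, rfl⟩ := ihV
    obtain ⟨J, hJh, rfl⟩ := ihW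
    refine ⟨I ⊓ J, Ideal.IsHomogeneous.inf hIh hJh, ?_⟩
    ext P
    simp only [Set.mem_inter_iff, Set.mem_setOf_eq]
    constructor
    · rintro ⟨hI, hJ⟩ hle
      obtain ⟨a, hah, haI, haP⟩ := exists_homog_mem_not_mem 𝒜 hIh hI
      obtain ⟨b, hbh, hbJ, hbP⟩ := exists_homog_mem_not_mem 𝒜 hJh hJ
      have : a * b ∈ P.1 := hle ⟨Ideal.mul_mem_right _ _ haI, Ideal.mul_mem_left _ _ hbJ⟩
      rcases P.2.2.2 a b hah hbh this with h | h
      exacts [haP h, hbP h]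
    · intro h
      exact ⟨fun hI => h (le_trans inf_le_left hI), fun hJ => h (le_trans inf_le_right hJ)⟩
  | sUnion s hs ih =>
    choose f hf1 hf2 using ih
    refine ⟨⨆ (V : Set (GSpec 𝒜)) (hV : V ∈ s), f V hV, ?_, ?_⟩
    · exact Ideal.IsHomogeneous.iSup fun V => Ideal.IsHomogeneous.iSup fun hV => hf1 V hV
    · ext P
      simp only [Set.mem_sUnion, Set.mem_setOf_eq, iSup_le_iff, not_forall]
      constructor
      · rintro ⟨V, hVs, hPV⟩
        refine ⟨V, hVs, ?_⟩
        have := hf2 V hVs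
        rw [this] at hPV
        exact hPV
      · rintro ⟨V, hVs, hPV⟩
        refine ⟨V, hVs, ?_⟩
        rw [hf2 V hVs]
        exact hPV

end Topology

section MainImp
variable {G : Type*} [AddGroup G] [DecidableEq G] {R : Type*} [CommRing R]
variable (𝒜 : G → AddSubgroup R) [GradedRing 𝒜]

lemma exists_deg_zero_pair (hG : AddMonoid.IsTorsion G) {Q Q' : Ideal R}
    (hQ : IsGradedPrime 𝒜 Q) (hQ' : IsGradedPrime 𝒜 Q') (h1 : ¬ Q ≤ Q') (h2 : ¬ Q' ≤ Q) :
    ∃ a b : R, a ∈ 𝒜 0 ∧ b ∈ 𝒜 0 ∧ a ∈ Q ∧ a ∉ Q' ∧ b ∈ Q' ∧ b ∉ Q := by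
  obtain ⟨x, hxh, hxQ, hxQ'⟩ := exists_homog_mem_not_mem 𝒜 hQ.1 h1
  obtain ⟨y, hyh, hyQ', hyQ⟩ := exists_homog_mem_not_mem 𝒜 hQ'.1 h2
  obtain ⟨dx, hdx⟩ := id hxh
  obtain ⟨dy, hdy⟩ := id hyh
  have hmx : 0 < addOrderOf dx := (hG dx).addOrderOf_pos
  have hmy : 0 < addOrderOf dy := (hG dy).addOrderOf_pos
  refine ⟨x ^ addOrderOf dx, y ^ addOrderOf dy, ?_, ?_, ?_, ?_, ?_, ?_⟩
  · have h := SetLike.pow_mem_graded (addOrderOf dx) hdx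
    rwa [addOrderOf_nsmul_eq_zero] at h
  · have h := SetLike.pow_mem_graded (addOrderOf dy) hdy
    rwa [addOrderOf_nsmul_eq_zero] at h
  · exact Ideal.pow_mem_of_mem _ hxQ _ hmx
  · exact fun h => hxQ' (mem_of_pow_mem 𝒜 hQ' hxh hmx.ne' h)
  · exact Ideal.pow_mem_of_mem _ hyQ' _ hmy
  · exact fun h => hyQ (mem_of_pow_mem 𝒜 hQ hyh hmy.ne' h)

lemma normal_to_pm (hG : AddMonoid.IsTorsion G)
    (hN : ∀ t : R, SetLike.IsHomogeneousElem 𝒜 t → ¬ IsNilpotent t →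
      NormalSpace { P : GSpec 𝒜 // t ∉ P.1 }) : IsPMPlusGraded 𝒜 := by
  intro P Q Q' hP hQ hQ' hPQ hPQ'
  by_contra hcon
  push_neg at hcon
  obtain ⟨h1, h2⟩ := hcon
  obtain ⟨a, b, ha0, hb0, haQ, haQ', hbQ', hbQ⟩ :=
    exists_deg_zero_pair 𝒜 hG hQ hQ' h1 h2
  set t : R := a + b with ht
  have htmem : t ∈ 𝒜 0 := add_mem ha0 hb0
  have hth : SetLike.IsHomogeneousElem 𝒜 t := ⟨0, htmem⟩
  have htQ : t ∉ Q := by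
    intro h
    exact hbQ (by simpa [ht] using Ideal.sub_mem _ h haQ)
  have htQ' : t ∉ Q' := by
    intro h
    exact haQ' (by simpa [ht] using Ideal.sub_mem _ h hbQ')
  have htP : t ∉ P := fun h => htQ (hPQ h)
  have htnil : ¬ IsNilpotent t := by
    rintro ⟨n, hn⟩
    rcases Nat.eq_zero_or_pos n with rfl | hpos
    · rw [pow_zero] at hn
      exact hQ.2.1 (Ideal.eq_top_iff_one _ |>.mpr (hn ▸ Q.zero_mem))
    · exact htQ (mem_of_pow_mem 𝒜 hQ hth hpos.ne' (hn ▸ Q.zero_mem))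
  haveI hNS := hN t hth htnil
  set C1 : Set { P : GSpec 𝒜 // t ∉ P.1 } := {x | Q ≤ x.1.1} with hC1def
  set C2 : Set { P : GSpec 𝒜 // t ∉ P.1 } := {x | Q' ≤ x.1.1} with hC2def
  have hC1 : IsClosed C1 := by
    rw [← isOpen_compl_iff]
    have : C1ᶜ = Subtype.val ⁻¹' {P' : GSpec 𝒜 | ¬ Q ≤ P'.1} := rfl
    rw [this]
    exact (isOpen_not_le 𝒜 hQ.1).preimage continuous_subtype_val
  have hC2 : IsClosed C2 := by
    rw [← isOpen_compl_iff]
    have : C2ᶜ = Subtype.val ⁻¹' {P' : GSpec 𝒜 | ¬ Q' ≤ P'.1} := rfl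
    rw [this]
    exact (isOpen_not_le 𝒜 hQ'.1).preimage continuous_subtype_val
  have hdisj : Disjoint C1 C2 := by
    rw [Set.disjoint_left]
    intro x hx1 hx2
    exact x.2 (add_mem (hx1 haQ) (hx2 hbQ'))
  obtain ⟨U, V, hUo, hVo, hC1U, hC2V, hUV⟩ := hNS.normal C1 C2 hC1 hC2 hdisj
  obtain ⟨U₀, hU₀o, hU₀eq⟩ := isOpen_induced_iff.mp hUo
  obtain ⟨V₀, hV₀o, hV₀eq⟩ := isOpen_induced_iff.mp hVo
  have hxQ : (⟨⟨Q, hQ⟩, htQ⟩ : { P : GSpec 𝒜 // t ∉ P.1 }) ∈ U := hC1U (show Q ≤ Q from le_rfl)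
  have hxQ' : (⟨⟨Q', hQ'⟩, htQ'⟩ : { P : GSpec 𝒜 // t ∉ P.1 }) ∈ V := hC2V (show Q' ≤ Q' from le_rfl)
  have hQU₀ : (⟨Q, hQ⟩ : GSpec 𝒜) ∈ U₀ := by rw [← hU₀eq] at hxQ; exact hxQ
  have hQ'V₀ : (⟨Q', hQ'⟩ : GSpec 𝒜) ∈ V₀ := by rw [← hV₀eq] at hxQ'; exact hxQ'
  have hPU₀ : (⟨P, hP⟩ : GSpec 𝒜) ∈ U₀ := mem_open_of_le 𝒜 hPQ hU₀o hQU₀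
  have hPV₀ : (⟨P, hP⟩ : GSpec 𝒜) ∈ V₀ := mem_open_of_le 𝒜 hPQ' hV₀o hQ'V₀
  have hxP : (⟨⟨P, hP⟩, htP⟩ : { P : GSpec 𝒜 // t ∉ P.1 }) ∈ U ∩ V := by
    constructor
    · rw [← hU₀eq]; exact hPU₀
    · rw [← hV₀eq]; exact hPV₀
  exact Set.disjoint_left.mp hUV hxP.1 hxP.2

end MainImp

section AD
variable {G : Type*} [AddGroup G] [DecidableEq G] {R : Type*} [CommRing R]
variable (𝒜 : G → AddSubgroup R) [GradedRing 𝒜]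

lemma key_mul {t : R} {e : G} (hd : t ∈ 𝒜 e) {N k k' : ℕ} {r r' c : R}
    (hr : r ∈ 𝒜 (k • e)) (hr' : r' ∈ 𝒜 (k' • e)) (hc : c ∈ 𝒜 (N • e)) :
    ∃ r'' ∈ 𝒜 ((k + k' + N) • e),
      (t ^ (k + N) + r * c) * (t ^ (k' + N) + r' * c) = t ^ ((k + k' + N) + N) + r'' * c := by
  refine ⟨r * t ^ (k' + N) + t ^ (k + N) * r' + (r * r') * c, ?_, by ring⟩
  have m1 : r * t ^ (k' + N) ∈ 𝒜 ((k + (k' + N)) • e) := by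
    rw [add_nsmul]
    exact SetLike.mul_mem_graded hr (SetLike.pow_mem_graded _ hd)
  have m2 : t ^ (k + N) * r' ∈ 𝒜 (((k + N) + k') • e) := by
    rw [add_nsmul]
    exact SetLike.mul_mem_graded (SetLike.pow_mem_graded _ hd) hr'
  have m3 : (r * r') * c ∈ 𝒜 (((k + k') + N) • e) := by
    rw [add_nsmul, add_nsmul]
    exact SetLike.mul_mem_graded (SetLike.mul_mem_graded hr hr') hc
  have e1 : k + (k' + N) = k + k' + N := by omega
  have e2 : (k + N) + k' = k + k' + N := by omega
  rw [e1] at m1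
  rw [e2] at m2
  exact add_mem (add_mem m1 m2) m3

lemma pm_to_normal (hA : IsPMPlusGraded 𝒜) (t : R) (hth : SetLike.IsHomogeneousElem 𝒜 t)
    (htnil : ¬ IsNilpotent t) : NormalSpace { P : GSpec 𝒜 // t ∉ P.1 } := by
  classical
  obtain ⟨d, hd⟩ := hth
  have hpow : ∀ n : ℕ, t ^ n ∈ 𝒜 (n • d) := fun n => SetLike.pow_mem_graded n hd
  have hTpow_mul : ∀ x ∈ Set.range (t ^ · : ℕ → R), ∀ y ∈ Set.range (t ^ · : ℕ → R),
      x * y ∈ Set.range (t ^ · : ℕ → R) := by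
    rintro x ⟨i, rfl⟩ y ⟨j, rfl⟩
    exact ⟨i + j, by simp [pow_add]⟩
  have hpows_not : ∀ (P : Ideal R), IsGradedPrime 𝒜 P → t ∉ P → ∀ n : ℕ, t ^ n ∉ P := by
    intro P hP htP n hn
    rcases Nat.eq_zero_or_pos n with rfl | hp
    · exact hP.2.1 (Ideal.eq_top_iff_one _ |>.mpr (by simpa using hn))
    · exact htP (mem_of_pow_mem 𝒜 hP ⟨d, hd⟩ hp.ne' hn)
  constructor
  intro s₁ s₂ hs₁ hs₂ hdisj
  obtain ⟨Z₁, hZ₁c, hZ₁eq⟩ := isClosed_induced_iff.mp hs₁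
  obtain ⟨Z₂, hZ₂c, hZ₂eq⟩ := isClosed_induced_iff.mp hs₂
  obtain ⟨I, hIh, hIeq⟩ := isOpen_structure 𝒜 hZ₁c.isOpen_compl
  obtain ⟨J, hJh, hJeq⟩ := isOpen_structure 𝒜 hZ₂c.isOpen_compl
  have hZ₁ : Z₁ = {P : GSpec 𝒜 | I ≤ P.1} := by
    rw [← compl_compl Z₁, hIeq]
    ext P
    simp
  have hZ₂ : Z₂ = {P : GSpec 𝒜 | J ≤ P.1} := by
    rw [← compl_compl Z₂, hJeq]
    ext P
    simp
  have hrad : ∃ N : ℕ, t ^ N ∈ I ⊔ J := by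
    by_contra hno
    push_neg at hno
    obtain ⟨P₀, hP₀, hKP₀, hP₀T⟩ := exists_gradedPrime_of_disjoint 𝒜 (I ⊔ J)
      (Ideal.IsHomogeneous.sup hIh hJh) (Set.range (t ^ · : ℕ → R)) hTpow_mul
      ⟨1, ⟨0, pow_zero t⟩⟩ (by rintro x ⟨n, rfl⟩; exact hno n)
    have htP₀ : t ∉ P₀ := fun h => hP₀T _ ⟨1, pow_one t⟩ (by simpa using h)
    have hx1 : (⟨⟨P₀, hP₀⟩, htP₀⟩ : { P : GSpec 𝒜 // t ∉ P.1 }) ∈ s₁ := by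
      rw [← hZ₁eq]
      show (⟨P₀, hP₀⟩ : GSpec 𝒜) ∈ Z₁
      rw [hZ₁]
      exact le_trans le_sup_left hKP₀
    have hx2 : (⟨⟨P₀, hP₀⟩, htP₀⟩ : { P : GSpec 𝒜 // t ∉ P.1 }) ∈ s₂ := by
      rw [← hZ₂eq]
      show (⟨P₀, hP₀⟩ : GSpec 𝒜) ∈ Z₂
      rw [hZ₂]
      exact le_trans le_sup_right hKP₀
    exact Set.disjoint_left.mp hdisj hx1 hx2
  obtain ⟨N, hN⟩ := hrad
  obtain ⟨i', hi', j', hj', hij⟩ := Submodule.mem_sup.mp hN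
  set a : R := (DirectSum.decompose 𝒜 i' (N • d) : R) with ha_def
  set b : R := (DirectSum.decompose 𝒜 j' (N • d) : R) with hb_def
  have haI : a ∈ I := hIh _ hi'
  have hbJ : b ∈ J := hJh _ hj'
  have ha𝒜 : a ∈ 𝒜 (N • d) := SetLike.coe_mem _
  have hb𝒜 : b ∈ 𝒜 (N • d) := SetLike.coe_mem _
  have htN : t ^ N = a + b := by
    have h1 : (DirectSum.decompose 𝒜 (t ^ N) (N • d) : R) = t ^ N :=
      DirectSum.decompose_of_mem_same 𝒜 (hpow N)
    have h2 : (DirectSum.decompose 𝒜 (i' + j') (N • d) : R) = a + b := by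
      rw [DirectSum.decompose_add, DirectSum.add_apply, AddSubgroup.coe_add]
    rw [hij] at h2
    exact h1.symm.trans h2
  -- the key separation elements
  have key : ∃ (k l m : ℕ) (r s : R), r ∈ 𝒜 (k • d) ∧ s ∈ 𝒜 (l • d) ∧
      t ^ m * ((t ^ (k + N) + r * a) * (t ^ (l + N) + s * b)) = 0 := by
    by_contra hkey
    push_neg at hkey
    set T : Set R := {x | ∃ (k l m : ℕ) (r s : R), r ∈ 𝒜 (k • d) ∧ s ∈ 𝒜 (l • d) ∧
      x = t ^ m * ((t ^ (k + N) + r * a) * (t ^ (l + N) + s * b))} with hTdef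
    have hTmul : ∀ x ∈ T, ∀ y ∈ T, x * y ∈ T := by
      rintro x ⟨k, l, m, r, s, hr, hs, rfl⟩ y ⟨k', l', m', r', s', hr', hs', rfl⟩
      obtain ⟨r'', hr'', her⟩ := key_mul 𝒜 hd hr hr' ha𝒜
      obtain ⟨s'', hs'', hes⟩ := key_mul 𝒜 hd hs hs' hb𝒜
      refine ⟨k + k' + N, l + l' + N, m + m', r'', s'', hr'', hs'', ?_⟩
      rw [← her, ← hes]
      ring
    have hT0 : ∀ x ∈ T, x ∉ (⊥ : Ideal R) := by
      rintro x ⟨k, l, m, r, s, hr, hs, rfl⟩ hbot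
      rw [Ideal.mem_bot] at hbot
      exact hkey k l m r s hr hs hbot
    obtain ⟨P₀, hP₀, _, hP₀T⟩ := exists_gradedPrime_of_disjoint 𝒜 ⊥
      (fun i r hr => by rw [Ideal.mem_bot] at hr; subst hr; simp)
      T hTmul ⟨t ^ 0 * ((t ^ (0 + N) + 0 * a) * (t ^ (0 + N) + 0 * b)),
        0, 0, 0, 0, 0, (𝒜 _).zero_mem, (𝒜 _).zero_mem, rfl⟩ hT0
    have htP₀ : t ∉ P₀ := by
      intro h
      refine hP₀T (t ^ 1 * ((t ^ (0 + N) + 0 * a) * (t ^ (0 + N) + 0 * b)))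
        ⟨0, 0, 1, 0, 0, (𝒜 _).zero_mem, (𝒜 _).zero_mem, rfl⟩ ?_
      rw [pow_one]
      exact Ideal.mul_mem_right _ _ h
    -- P₀ ⊔ span {x} is disjoint from powers of t, for x = a and x = b
    have hstep : ∀ x : R, x ∈ 𝒜 (N • d) →
        (∀ (k : ℕ) (r : R), r ∈ 𝒜 (k • d) → t ^ (k + N) + r * x ∈ P₀ → False) →
        ∀ q : ℕ, t ^ q ∉ P₀ ⊔ Ideal.span {x} := by
      intro x hx𝒜 hTx q hq
      obtain ⟨p, hp, u, hu, hequ⟩ := Submodule.mem_sup.mp hq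
      obtain ⟨c, hc⟩ := Ideal.mem_span_singleton'.mp hu
      set c₀ : R := (DirectSum.decompose 𝒜 c (q • d - N • d) : R) with hc₀def
      have hdec : t ^ q = (DirectSum.decompose 𝒜 p (q • d) : R) + c₀ * x := by
        have h1 : (DirectSum.decompose 𝒜 (t ^ q) (q • d) : R) = t ^ q :=
          DirectSum.decompose_of_mem_same 𝒜 (hpow q)
        have h2 : (DirectSum.decompose 𝒜 (p + c * x) (q • d) : R) =
            (DirectSum.decompose 𝒜 p (q • d) : R) + (DirectSum.decompose 𝒜 (c * x) (q • d) : R) := by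
          rw [DirectSum.decompose_add, DirectSum.add_apply, AddSubgroup.coe_add]
        rw [decompose_mul_right_mem' 𝒜 hx𝒜] at h2
        rw [hc, hequ] at h2
        exact h1.symm.trans h2
      have hc₀mem : c₀ ∈ 𝒜 (q • d - N • d) := SetLike.coe_mem _
      have hrmem : -(t ^ N * c₀) ∈ 𝒜 (q • d) := by
        have : t ^ N * c₀ ∈ 𝒜 (N • d + (q • d - N • d)) :=
          SetLike.mul_mem_graded (hpow N) hc₀mem
        have heq : (N • d) + (q • d - N • d) = q • d := by
          have h := (AddCommute.refl d).nsmul_nsmul N q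
          rw [sub_eq_add_neg, ← add_assoc, h, add_assoc, add_neg_cancel, add_zero]
        rw [heq] at this
        exact neg_mem this
      have hyP : t ^ (q + N) + (-(t ^ N * c₀)) * x ∈ P₀ := by
        have hyeq : t ^ (q + N) + (-(t ^ N * c₀)) * x = t ^ N * (t ^ q - c₀ * x) := by ring
        rw [hyeq]
        refine Ideal.mul_mem_left _ _ ?_
        have : t ^ q - c₀ * x = (DirectSum.decompose 𝒜 p (q • d) : R) := by
          rw [hdec]; ring
        rw [this]
        exact hP₀.1 _ hp
      exact hTx q _ hrmem hyP
    have hTa : ∀ (k : ℕ) (r : R), r ∈ 𝒜 (k • d) → t ^ (k + N) + r * a ∈ P₀ → False := by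
      intro k r hr hmem
      refine hP₀T ((t ^ (k + N) + r * a) * (t ^ (k + N) + 0 * b))
        ⟨k, k, 0, r, 0, hr, (𝒜 _).zero_mem, by ring⟩ ?_
      exact Ideal.mul_mem_right _ _ hmem
    have hTb : ∀ (l : ℕ) (s : R), s ∈ 𝒜 (l • d) → t ^ (l + N) + s * b ∈ P₀ → False := by
      intro l s hs hmem
      refine hP₀T ((t ^ (l + N) + 0 * a) * (t ^ (l + N) + s * b))
        ⟨l, l, 0, 0, s, (𝒜 _).zero_mem, hs, by ring⟩ ?_
      exact Ideal.mul_mem_left _ _ hmem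
    obtain ⟨Ma, hMa, hPMa, hMaT⟩ := exists_gradedPrime_of_disjoint 𝒜 (P₀ ⊔ Ideal.span {a})
      (Ideal.IsHomogeneous.sup hP₀.1 (Ideal.homogeneous_span 𝒜 _
        (by rintro y (rfl : y = a); exact ⟨_, ha𝒜⟩)))
      (Set.range (t ^ · : ℕ → R)) hTpow_mul ⟨1, ⟨0, pow_zero t⟩⟩
      (by rintro z ⟨n, rfl⟩; exact hstep a ha𝒜 hTa n)
    obtain ⟨Mb, hMb, hPMb, hMbT⟩ := exists_gradedPrime_of_disjoint 𝒜 (P₀ ⊔ Ideal.span {b})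
      (Ideal.IsHomogeneous.sup hP₀.1 (Ideal.homogeneous_span 𝒜 _
        (by rintro y (rfl : y = b); exact ⟨_, hb𝒜⟩)))
      (Set.range (t ^ · : ℕ → R)) hTpow_mul ⟨1, ⟨0, pow_zero t⟩⟩
      (by rintro z ⟨n, rfl⟩; exact hstep b hb𝒜 hTb n)
    have haMa : a ∈ Ma := hPMa (Submodule.mem_sup_right (Ideal.subset_span rfl))
    have hbMb : b ∈ Mb := hPMb (Submodule.mem_sup_right (Ideal.subset_span rfl))
    have hP₀Ma : P₀ ≤ Ma := le_trans le_sup_left hPMa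
    have hP₀Mb : P₀ ≤ Mb := le_trans le_sup_left hPMb
    rcases hA P₀ Ma Mb hP₀ hMa hMb hP₀Ma hP₀Mb with hle | hle
    · refine hMbT (t ^ N) ⟨N, rfl⟩ ?_
      rw [htN]
      exact add_mem (hle haMa) hbMb
    · refine hMaT (t ^ N) ⟨N, rfl⟩ ?_
      rw [htN]
      exact add_mem haMa (hle hbMb)
  obtain ⟨k, l, m, r, s, hr, hs, heq0⟩ := key
  set u : R := t ^ (k + N) + r * a with hu_def
  set v : R := t ^ (l + N) + s * b with hv_def
  have hu𝒜 : u ∈ 𝒜 ((k + N) • d) := by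
    refine add_mem (hpow _) ?_
    rw [add_nsmul]
    exact SetLike.mul_mem_graded hr ha𝒜
  have hv𝒜 : v ∈ 𝒜 ((l + N) • d) := by
    refine add_mem (hpow _) ?_
    rw [add_nsmul]
    exact SetLike.mul_mem_graded hs hb𝒜
  refine ⟨Subtype.val ⁻¹' {P : GSpec 𝒜 | u ∉ P.1}, Subtype.val ⁻¹' {P : GSpec 𝒜 | v ∉ P.1},
    (isOpen_basicD 𝒜 ⟨_, hu𝒜⟩).preimage continuous_subtype_val,
    (isOpen_basicD 𝒜 ⟨_, hv𝒜⟩).preimage continuous_subtype_val, ?_, ?_, ?_⟩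
  · -- s₁ ⊆ U
    intro x hx
    have hxZ : x.1 ∈ Z₁ := by rw [← hZ₁eq] at hx; exact hx
    rw [hZ₁] at hxZ
    have hax : a ∈ x.1.1 := hxZ haI
    intro hux
    have : t ^ (k + N) ∈ x.1.1 := by
      have : (t ^ (k + N)) = u - r * a := by rw [hu_def]; ring
      rw [this]
      exact Ideal.sub_mem _ hux (Ideal.mul_mem_left _ _ hax)
    exact hpows_not x.1.1 x.1.2 x.2 _ this
  · -- s₂ ⊆ V
    intro x hx
    have hxZ : x.1 ∈ Z₂ := by rw [← hZ₂eq] at hx; exact hx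
    rw [hZ₂] at hxZ
    have hbx : b ∈ x.1.1 := hxZ hbJ
    intro hvx
    have : t ^ (l + N) ∈ x.1.1 := by
      have : (t ^ (l + N)) = v - s * b := by rw [hv_def]; ring
      rw [this]
      exact Ideal.sub_mem _ hvx (Ideal.mul_mem_left _ _ hbx)
    exact hpows_not x.1.1 x.1.2 x.2 _ this
  · -- disjoint
    rw [Set.disjoint_left]
    intro x hxu hxv
    have h0 : t ^ m * (u * v) ∈ x.1.1 := heq0 ▸ (x.1.1).zero_mem
    rcases x.1.2.2.2 _ _ ⟨_, hpow m⟩ ⟨_, SetLike.mul_mem_graded hu𝒜 hv𝒜⟩ h0 with h | h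
    · exact hpows_not x.1.1 x.1.2 x.2 m h
    · rcases x.1.2.2.2 _ _ ⟨_, hu𝒜⟩ ⟨_, hv𝒜⟩ h with h' | h'
      · exact hxu h'
      · exact hxv h'

end AD

section Loc
variable {G : Type*} [AddGroup G] [DecidableEq G] {R : Type*} [CommRing R]
variable (𝒜 : G → AddSubgroup R) [GradedRing 𝒜]
variable {S : Submonoid R} (ℬ : G → AddSubgroup (Localization S)) [GradedRing ℬ]

variable (hdesc : ∀ (g : G) (x : Localization S), x ∈ ℬ g ↔
    ∃ (r s : R) (h : G) (hs : s ∈ S), r ∈ 𝒜 (g + h) ∧ s ∈ 𝒜 h ∧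
      x = Localization.mk r ⟨s, hs⟩)

include hdesc

lemma loc_algebraMap_mem {r : R} {g : G} (hr : r ∈ 𝒜 g) :
    algebraMap R (Localization S) r ∈ ℬ g := by
  rw [← Localization.mk_one_eq_algebraMap]
  exact (hdesc g _).mpr ⟨r, 1, 0, S.one_mem, by rwa [add_zero],
    SetLike.one_mem_graded 𝒜, rfl⟩

lemma loc_decompose_algebraMap (r : R) (g : G) :
    (DirectSum.decompose ℬ (algebraMap R (Localization S) r) g : Localization S)
      = algebraMap R (Localization S) (DirectSum.decompose 𝒜 r g : R) := by
  classical
  have key : ∀ i : G, (DirectSum.decompose ℬ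
        (algebraMap R (Localization S) (DirectSum.decompose 𝒜 r i : R)) g : Localization S)
      = if i = g then algebraMap R (Localization S) (DirectSum.decompose 𝒜 r i : R) else 0 := by
    intro i
    have hmem := loc_algebraMap_mem 𝒜 ℬ hdesc (SetLike.coe_mem (DirectSum.decompose 𝒜 r i))
    by_cases hi : i = g
    · subst hi
      rw [if_pos rfl, DirectSum.decompose_of_mem_same ℬ hmem]
    · rw [if_neg hi, DirectSum.decompose_of_mem_ne ℬ hmem hi]
  conv_lhs => rw [← DirectSum.sum_support_decompose 𝒜 r, map_sum]
  rw [DirectSum.decompose_sum, DFinsupp.finset_sum_apply, AddSubmonoidClass.coe_finset_sum]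
  simp_rw [key]
  rw [Finset.sum_ite_eq' ((DirectSum.decompose 𝒜 r).support) g
    (fun i => algebraMap R (Localization S) (DirectSum.decompose 𝒜 r i : R))]
  split_ifs with h
  · rfl
  · rw [DFinsupp.notMem_support_iff.mp h]
    simp

lemma loc_comap_isGradedPrime {Q : Ideal (Localization S)} (hQ : IsGradedPrime ℬ Q) :
    IsGradedPrime 𝒜 (Q.comap (algebraMap R (Localization S))) := by
  refine ⟨?_, ?_, ?_⟩
  · intro g r hr
    rw [Ideal.mem_comap, ← loc_decompose_algebraMap 𝒜 ℬ hdesc]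
    exact hQ.1 g hr
  · intro htop
    refine hQ.2.1 (Ideal.eq_top_iff_one _ |>.mpr ?_)
    have : (1 : R) ∈ Q.comap (algebraMap R (Localization S)) := htop ▸ Submodule.mem_top
    rw [Ideal.mem_comap, map_one] at this
    exact this
  · intro a b ha hb hab
    obtain ⟨ga, hga⟩ := ha
    obtain ⟨gb, hgb⟩ := hb
    rw [Ideal.mem_comap, map_mul] at hab
    rcases hQ.2.2 _ _ ⟨ga, loc_algebraMap_mem 𝒜 ℬ hdesc hga⟩
      ⟨gb, loc_algebraMap_mem 𝒜 ℬ hdesc hgb⟩ hab with h | h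
    · exact Or.inl h
    · exact Or.inr h

lemma loc_le_of_comap_le {Q Q' : Ideal (Localization S)} (hQ : Q.IsHomogeneous ℬ)
    (h : Q.comap (algebraMap R (Localization S)) ≤ Q'.comap (algebraMap R (Localization S))) :
    Q ≤ Q' := by
  classical
  intro x hx
  rw [← DirectSum.sum_support_decompose ℬ x]
  refine Submodule.sum_mem _ fun g _ => ?_
  have hxg : (DirectSum.decompose ℬ x g : Localization S) ∈ Q := hQ g hx
  obtain ⟨r, s, h', hs, hr, hsh, hxeq⟩ := (hdesc g _).mp (SetLike.coe_mem (DirectSum.decompose ℬ x g))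
  have e1 : algebraMap R (Localization S) s * (DirectSum.decompose ℬ x g : Localization S)
      = algebraMap R (Localization S) r := by
    rw [hxeq, ← Localization.mk_one_eq_algebraMap, ← Localization.mk_one_eq_algebraMap,
      Localization.mk_mul, Localization.mk_eq_mk_iff, Localization.r_iff_exists]
    exact ⟨1, by simp [mul_comm]⟩
  have hrQ : algebraMap R (Localization S) r ∈ Q := by
    rw [← e1]
    exact Ideal.mul_mem_left _ _ hxg
  have hrQ' : algebraMap R (Localization S) r ∈ Q' := h hrQ
  have e2 : (DirectSum.decompose ℬ x g : Localization S)
      = Localization.mk 1 ⟨s, hs⟩ * algebraMap R (Localization S) r := by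
    rw [hxeq, ← Localization.mk_one_eq_algebraMap, Localization.mk_mul, one_mul, mul_one]
  rw [e2]
  exact Ideal.mul_mem_left _ _ hrQ'

lemma loc_mem_map_iff (I : Ideal R) (x : Localization S) :
    x ∈ I.map (algebraMap R (Localization S)) ↔
      ∃ (i : R) (_ : i ∈ I) (s : S), x = Localization.mk i s := by
  constructor
  · intro hx
    obtain ⟨⟨⟨i, hi⟩, s⟩, hv⟩ := IsLocalization.mem_map_algebraMap_iff S _ |>.mp hx
    refine ⟨i, hi, s, ?_⟩
    have hunit : x * algebraMap R (Localization S) s * Localization.mk 1 s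
        = x * 1 := by
      rw [mul_assoc, ← Localization.mk_one_eq_algebraMap, Localization.mk_mul, mul_one, one_mul,
        Localization.mk_self]
    rw [mul_one] at hunit
    rw [← hunit, hv, ← Localization.mk_one_eq_algebraMap, Localization.mk_mul, mul_one, one_mul]
  · rintro ⟨i, hi, s, rfl⟩
    have : Localization.mk i s = Localization.mk 1 s * algebraMap R (Localization S) i := by
      rw [← Localization.mk_one_eq_algebraMap, Localization.mk_mul, one_mul, mul_one]
    rw [this]
    exact Ideal.mul_mem_left _ _ (Ideal.mem_map_of_mem _ hi)

lemma loc_map_isHomogeneous {I : Ideal R} (hI : I.IsHomogeneous 𝒜) :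
    (I.map (algebraMap R (Localization S))).IsHomogeneous ℬ := by
  obtain ⟨s0, rfl⟩ := (Ideal.IsHomogeneous.iff_exists 𝒜 I).mp hI
  rw [Ideal.map_span]
  refine Ideal.homogeneous_span ℬ _ ?_
  rintro y ⟨x, ⟨⟨x', hx'⟩, _, rfl⟩, rfl⟩
  obtain ⟨g, hg⟩ := hx'
  exact ⟨g, loc_algebraMap_mem 𝒜 ℬ hdesc hg⟩

lemma pm_to_gelfand (hA : IsPMPlusGraded 𝒜) : IsGelfandGraded ℬ := by
  intro P hP
  obtain ⟨M, hM, hPM⟩ := exists_gradedMaximal ℬ hP.1 hP.2.1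
  refine ⟨M, ⟨hM, hPM⟩, ?_⟩
  rintro M' ⟨hM', hPM'⟩
  have hMp := IsGradedMaximal.isGradedPrime ℬ hM
  have hM'p := IsGradedMaximal.isGradedPrime ℬ hM'
  rcases hA (P.comap (algebraMap R (Localization S)))
      (M'.comap (algebraMap R (Localization S))) (M.comap (algebraMap R (Localization S)))
      (loc_comap_isGradedPrime 𝒜 ℬ hdesc hP) (loc_comap_isGradedPrime 𝒜 ℬ hdesc hM'p)
      (loc_comap_isGradedPrime 𝒜 ℬ hdesc hMp)
      (Ideal.comap_mono hPM') (Ideal.comap_mono hPM) with h | h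
  · have hle : M' ≤ M := loc_le_of_comap_le 𝒜 ℬ hdesc hM'.1 h
    exact (hM'.2.2 M hM.1 hle hM.2.1).symm
  · have hle : M ≤ M' := loc_le_of_comap_le 𝒜 ℬ hdesc hM.1 h
    exact hM.2.2 M' hM'.1 hle hM'.2.1

end Loc

section Construction
variable {G : Type*} [AddGroup G] [DecidableEq G] {R : Type*} [CommRing R]
variable (𝒜 : G → AddSubgroup R) [GradedRing 𝒜]
variable (t : R)

lemma pow_mem_powers (k : ℕ) : t ^ k ∈ Submonoid.powers t := ⟨k, rfl⟩

lemma normal_form (ht0 : t ∈ 𝒜 0) (htnil : ¬ IsNilpotent t) (g : G)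
    (x : Localization (Submonoid.powers t)) :
    (∃ (r s : R) (h : G) (hs : s ∈ Submonoid.powers t), r ∈ 𝒜 (g + h) ∧ s ∈ 𝒜 h ∧
        x = Localization.mk r ⟨s, hs⟩) ↔
    (∃ (r : R) (k : ℕ), r ∈ 𝒜 g ∧ x = Localization.mk r ⟨t ^ k, pow_mem_powers t k⟩) := by
  have hpow0 : ∀ k : ℕ, t ^ k ∈ 𝒜 0 := by
    intro k
    have h := SetLike.pow_mem_graded k ht0
    rwa [smul_zero] at h
  constructor
  · rintro ⟨r, s, h, hs, hr, hsh, rfl⟩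
    obtain ⟨k, hk⟩ := hs
    have hs0 : s ∈ 𝒜 0 := hk ▸ hpow0 k
    have hsne : s ≠ 0 := by
      rintro rfl
      exact htnil ⟨k, hk⟩
    have h0 : h = 0 := degree_unique 𝒜 hsh hs0 hsne
    subst h0
    rw [add_zero] at hr
    refine ⟨r, k, hr, ?_⟩
    congr 1
    exact Subtype.ext hk.symm
  · rintro ⟨r, k, hr, rfl⟩
    exact ⟨r, t ^ k, 0, pow_mem_powers t k, by rwa [add_zero], hpow0 k, rfl⟩

variable (ht0 : t ∈ 𝒜 0) (htnil : ¬ IsNilpotent t)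

def locB (g : G) : AddSubgroup (Localization (Submonoid.powers t)) where
  carrier := {x | ∃ (r s : R) (h : G) (hs : s ∈ Submonoid.powers t), r ∈ 𝒜 (g + h) ∧ s ∈ 𝒜 h ∧
      x = Localization.mk r ⟨s, hs⟩}
  zero_mem' := by
    rw [Set.mem_setOf_eq, normal_form 𝒜 t ht0 htnil]
    exact ⟨0, 0, (𝒜 g).zero_mem, (Localization.mk_zero _).symm⟩
  add_mem' := by
    intro x y hx hy
    rw [Set.mem_setOf_eq, normal_form 𝒜 t ht0 htnil] at hx hy ⊢
    obtain ⟨r, k, hr, rfl⟩ := hx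
    obtain ⟨r', l, hr', rfl⟩ := hy
    refine ⟨t ^ k * r' + t ^ l * r, k + l, ?_, ?_⟩
    · have h1 : t ^ k * r' ∈ 𝒜 (0 + g) := SetLike.mul_mem_graded
        (by have := SetLike.pow_mem_graded k ht0; rwa [smul_zero] at this) hr'
      have h2 : t ^ l * r ∈ 𝒜 (0 + g) := SetLike.mul_mem_graded
        (by have := SetLike.pow_mem_graded l ht0; rwa [smul_zero] at this) hr
      rw [zero_add] at h1 h2
      exact add_mem h1 h2
    · have hden : (⟨t ^ k, pow_mem_powers t k⟩ : Submonoid.powers t) * ⟨t ^ l, pow_mem_powers t l⟩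
          = ⟨t ^ (k + l), pow_mem_powers t (k + l)⟩ := Subtype.ext (pow_add t k l).symm
      rw [Localization.add_mk, hden]
  neg_mem' := by
    intro x hx
    rw [Set.mem_setOf_eq, normal_form 𝒜 t ht0 htnil] at hx ⊢
    obtain ⟨r, k, hr, rfl⟩ := hx
    exact ⟨-r, k, neg_mem hr, (Localization.neg_mk _ _)⟩

lemma locB_mem_iff (g : G) (x : Localization (Submonoid.powers t)) :
    x ∈ locB 𝒜 t ht0 htnil g ↔
      ∃ (r s : R) (h : G) (hs : s ∈ Submonoid.powers t), r ∈ 𝒜 (g + h) ∧ s ∈ 𝒜 h ∧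
        x = Localization.mk r ⟨s, hs⟩ := Iff.rfl

lemma locB_mem_normal (g : G) (x : Localization (Submonoid.powers t)) :
    x ∈ locB 𝒜 t ht0 htnil g ↔
      ∃ (r : R) (k : ℕ), r ∈ 𝒜 g ∧ x = Localization.mk r ⟨t ^ k, pow_mem_powers t k⟩ :=
  (locB_mem_iff 𝒜 t ht0 htnil g x).trans (normal_form 𝒜 t ht0 htnil g x)

lemma locB_gradedMonoid : SetLike.GradedMonoid (locB 𝒜 t ht0 htnil) where
  one_mem := by
    rw [locB_mem_normal]
    refine ⟨1, 0, SetLike.one_mem_graded 𝒜, ?_⟩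
    rw [show (⟨t ^ 0, pow_mem_powers t 0⟩ : Submonoid.powers t) = 1 from Subtype.ext (pow_zero t)]
    exact Localization.mk_one.symm
  mul_mem := by
    intro gi gj x y hx hy
    rw [locB_mem_normal] at hx hy ⊢
    obtain ⟨r, k, hr, rfl⟩ := hx
    obtain ⟨r', l, hr', rfl⟩ := hy
    refine ⟨r * r', k + l, SetLike.mul_mem_graded hr hr', ?_⟩
    have hden : (⟨t ^ k, pow_mem_powers t k⟩ : Submonoid.powers t) * ⟨t ^ l, pow_mem_powers t l⟩
        = ⟨t ^ (k + l), pow_mem_powers t (k + l)⟩ := Subtype.ext (pow_add t k l).symm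
    rw [Localization.mk_mul, hden]

lemma locB_isInternal : DirectSum.IsInternal (locB 𝒜 t ht0 htnil) := by
  classical
  have hpow0 : ∀ m : ℕ, t ^ m ∈ 𝒜 0 := by
    intro m
    have h := SetLike.pow_mem_graded m ht0
    rwa [smul_zero] at h
  constructor
  · -- injective
    rw [injective_iff_map_eq_zero]
    intro v hv
    have hrep : ∀ g : G, ∃ (r : R) (kk : ℕ), r ∈ 𝒜 g ∧
        ((v g : Localization (Submonoid.powers t))) =
          Localization.mk r ⟨t ^ kk, pow_mem_powers t kk⟩ := fun g =>
      (locB_mem_normal 𝒜 t ht0 htnil g _).mp (SetLike.coe_mem (v g))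
    choose r k hr hmk using hrep
    set K : ℕ := ∑ g ∈ DFinsupp.support v, k g with hK
    have hle : ∀ g ∈ DFinsupp.support v, k g ≤ K := fun g hg =>
      Finset.single_le_sum (fun _ _ => Nat.zero_le _) hg
    have hterm : ∀ g ∈ DFinsupp.support v, (v g : Localization (Submonoid.powers t)) =
        Localization.mk (r g * t ^ (K - k g)) ⟨t ^ K, pow_mem_powers t K⟩ := by
      intro g hg
      rw [hmk g, Localization.mk_eq_mk_iff, Localization.r_iff_exists]
      refine ⟨1, ?_⟩
      simp only [OneMemClass.coe_one, one_mul]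
      rw [← pow_mul_pow_sub t (hle g hg)]
      ring
    have hv' : ∑ g ∈ DFinsupp.support v, (v g : Localization (Submonoid.powers t)) = 0 := by
      rw [← hv]
      conv_rhs => rw [← DirectSum.sum_support_of v]
      rw [map_sum]
      exact Finset.sum_congr rfl fun g _ => by rw [DirectSum.coeAddMonoidHom_of]
    have hsum0 : Localization.mk (∑ g ∈ DFinsupp.support v, r g * t ^ (K - k g))
        ⟨t ^ K, pow_mem_powers t K⟩ = 0 := by
      rw [Localization.mk_sum, ← Finset.sum_congr rfl hterm]
      exact hv'
    have hann : ∃ e : ℕ, t ^ e * (∑ g ∈ DFinsupp.support v, r g * t ^ (K - k g)) = 0 := by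
      rw [show (0 : Localization (Submonoid.powers t)) = Localization.mk 0 1 from
        (Localization.mk_zero _).symm, Localization.mk_eq_mk_iff,
        Localization.r_iff_exists] at hsum0
      obtain ⟨c, hc⟩ := hsum0
      obtain ⟨e, he⟩ := c.2
      refine ⟨e, ?_⟩
      have h2 := hc
      simp only [OneMemClass.coe_one, one_mul, mul_zero] at h2
      rw [← he] at h2
      exact h2
    obtain ⟨e, he⟩ := hann
    rw [Finset.mul_sum] at he
    have hmem𝒜 : ∀ g : G, t ^ e * (r g * t ^ (K - k g)) ∈ 𝒜 g := by
      intro g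
      have h1 : r g * t ^ (K - k g) ∈ 𝒜 (g + 0) := SetLike.mul_mem_graded (hr g) (hpow0 _)
      rw [add_zero] at h1
      have h2 : t ^ e * (r g * t ^ (K - k g)) ∈ 𝒜 (0 + g) := SetLike.mul_mem_graded (hpow0 _) h1
      rwa [zero_add] at h2
    have hzero : ∀ g₀ ∈ DFinsupp.support v, t ^ e * (r g₀ * t ^ (K - k g₀)) = 0 := by
      intro g₀ hg₀
      have hdec : (DirectSum.decompose 𝒜
          (∑ g ∈ DFinsupp.support v, t ^ e * (r g * t ^ (K - k g))) g₀ : R)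
          = t ^ e * (r g₀ * t ^ (K - k g₀)) := by
        rw [DirectSum.decompose_sum, DFinsupp.finset_sum_apply, AddSubmonoidClass.coe_finset_sum]
        rw [Finset.sum_eq_single g₀]
        · exact DirectSum.decompose_of_mem_same 𝒜 (hmem𝒜 g₀)
        · intro g hg hne
          exact DirectSum.decompose_of_mem_ne 𝒜 (hmem𝒜 g) hne
        · intro h
          exact absurd hg₀ h
      rw [he] at hdec
      rw [← hdec]
      simp
    refine DFinsupp.ext fun g₀ => ?_
    by_cases hg₀ : g₀ ∈ DFinsupp.support v
    · have hvg : (v g₀ : Localization (Submonoid.powers t)) = 0 := by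
        rw [hterm g₀ hg₀]
        have : Localization.mk (r g₀ * t ^ (K - k g₀)) ⟨t ^ K, pow_mem_powers t K⟩
            = Localization.mk (t ^ e * (r g₀ * t ^ (K - k g₀))) ⟨t ^ (e + K),
              pow_mem_powers t (e + K)⟩ := by
          rw [Localization.mk_eq_mk_iff, Localization.r_iff_exists]
          exact ⟨1, by push_cast; ring⟩
        rw [this, hzero g₀ hg₀, Localization.mk_zero]
      exact Subtype.ext hvg
    · rw [DFinsupp.notMem_support_iff.mp hg₀]
      rfl
  · -- surjective
    intro x
    refine Localization.induction_on x ?_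
    rintro ⟨rx, sx⟩
    obtain ⟨kx, hkx⟩ := sx.2
    have hsx : sx = ⟨t ^ kx, pow_mem_powers t kx⟩ := Subtype.ext hkx.symm
    refine ⟨∑ g ∈ (DirectSum.decompose 𝒜 rx).support,
      DirectSum.of (fun g => (locB 𝒜 t ht0 htnil g)) g
        ⟨Localization.mk (DirectSum.decompose 𝒜 rx g : R) sx,
          (locB_mem_normal 𝒜 t ht0 htnil g _).mpr
            ⟨(DirectSum.decompose 𝒜 rx g : R), kx, SetLike.coe_mem _, by rw [hsx]⟩⟩, ?_⟩
    rw [map_sum]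
    simp only [DirectSum.coeAddMonoidHom_of]
    rw [← Localization.mk_sum]
    congr 1
    exact DirectSum.sum_support_decompose 𝒜 rx

noncomputable instance locB_gradedRing : GradedRing (locB 𝒜 t ht0 htnil) where
  toGradedMonoid := locB_gradedMonoid 𝒜 t ht0 htnil
  toDecomposition := (locB_isInternal 𝒜 t ht0 htnil).chooseDecomposition

end Construction

section CtoA
variable {G : Type*} [AddGroup G] [DecidableEq G] {R : Type*} [CommRing R]
variable (𝒜 : G → AddSubgroup R) [GradedRing 𝒜]
variable (t : R) (ht0 : t ∈ 𝒜 0) (htnil : ¬ IsNilpotent t)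

include ht0 in
lemma tpow_not_mem {P : Ideal R} (hP : IsGradedPrime 𝒜 P) (htP : t ∉ P) (n : ℕ) :
    t ^ n ∉ P := by
  intro hn
  rcases Nat.eq_zero_or_pos n with rfl | hp
  · exact hP.2.1 (Ideal.eq_top_iff_one _ |>.mpr (by simpa using hn))
  · exact htP (mem_of_pow_mem 𝒜 hP ⟨0, ht0⟩ hp.ne' hn)

lemma map_isGradedPrime_locB {P : Ideal R} (hP : IsGradedPrime 𝒜 P) (htP : t ∉ P) :
    IsGradedPrime (locB 𝒜 t ht0 htnil)
      (P.map (algebraMap R (Localization (Submonoid.powers t)))) := by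
  refine ⟨loc_map_isHomogeneous 𝒜 (locB 𝒜 t ht0 htnil)
    (locB_mem_iff 𝒜 t ht0 htnil) hP.1, ?_, ?_⟩
  · intro htop
    have h1 : (1 : Localization (Submonoid.powers t)) ∈
        P.map (algebraMap R (Localization (Submonoid.powers t))) := htop ▸ Submodule.mem_top
    obtain ⟨p, hp, sden, heq⟩ := (loc_mem_map_iff 𝒜 (locB 𝒜 t ht0 htnil)
      (locB_mem_iff 𝒜 t ht0 htnil) P 1).mp h1
    obtain ⟨j, hj⟩ := sden.2
    rw [show (1 : Localization (Submonoid.powers t)) = Localization.mk 1 1 from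
      Localization.mk_one.symm, Localization.mk_eq_mk_iff, Localization.r_iff_exists] at heq
    obtain ⟨c, hc⟩ := heq
    obtain ⟨e, he⟩ := c.2
    simp only [OneMemClass.coe_one, one_mul, mul_one] at hc
    -- hc : ↑c * ↑sden = ↑c * p  (orientation to check)
    have hPmem : t ^ (e + j) ∈ P := by
      have h2 : (c : R) * p ∈ P := Ideal.mul_mem_left _ _ hp
      rw [← hc] at h2
      rwa [← he, ← hj, ← pow_add] at h2
    exact tpow_not_mem 𝒜 t ht0 hP htP _ hPmem
  · intro x y hx hy hxy
    obtain ⟨gx, hgx⟩ := hx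
    obtain ⟨gy, hgy⟩ := hy
    obtain ⟨r, kk, hr, rfl⟩ := (locB_mem_normal 𝒜 t ht0 htnil gx x).mp hgx
    obtain ⟨r', ll, hr', rfl⟩ := (locB_mem_normal 𝒜 t ht0 htnil gy y).mp hgy
    rw [Localization.mk_mul] at hxy
    obtain ⟨p, hp, sden, heq⟩ := (loc_mem_map_iff 𝒜 (locB 𝒜 t ht0 htnil)
      (locB_mem_iff 𝒜 t ht0 htnil) P _).mp hxy
    obtain ⟨j, hj⟩ := sden.2
    rw [Localization.mk_eq_mk_iff, Localization.r_iff_exists] at heq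
    obtain ⟨c, hc⟩ := heq
    obtain ⟨e, he⟩ := c.2
    simp only [Submonoid.coe_mul] at hc
    have hPmem : t ^ (e + j) * (r * r') ∈ P := by
      have h2 : (c : R) * (t ^ kk * t ^ ll * p) ∈ P :=
        Ideal.mul_mem_left _ _ (Ideal.mul_mem_left _ _ hp)
      rw [← hc] at h2
      have h3 : (c : R) * ((sden : R) * (r * r')) = t ^ (e + j) * (r * r') := by
        rw [← he, ← hj, pow_add]
        ring
      rwa [h3] at h2
    have hppow : t ^ (e + j) ∈ 𝒜 0 := by
      have h := SetLike.pow_mem_graded (e + j) ht0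
      rwa [smul_zero] at h
    rcases hP.2.2 _ _ ⟨0, hppow⟩ ⟨gx + gy, SetLike.mul_mem_graded hr hr'⟩ hPmem with h | h
    · exact absurd h (tpow_not_mem 𝒜 t ht0 hP htP _)
    rcases hP.2.2 _ _ ⟨gx, hr⟩ ⟨gy, hr'⟩ h with h' | h'
    · refine Or.inl ((loc_mem_map_iff 𝒜 (locB 𝒜 t ht0 htnil)
        (locB_mem_iff 𝒜 t ht0 htnil) P _).mpr ⟨r, h', _, rfl⟩)
    · refine Or.inr ((loc_mem_map_iff 𝒜 (locB 𝒜 t ht0 htnil)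
        (locB_mem_iff 𝒜 t ht0 htnil) P _).mpr ⟨r', h', _, rfl⟩)

end CtoA

section Final
variable {G : Type*} [AddGroup G] [DecidableEq G] {R : Type*} [CommRing R]
variable (𝒜 : G → AddSubgroup R) [GradedRing 𝒜]

lemma gelfand_to_pm (hG : AddMonoid.IsTorsion G)
    (hC : ∀ t : R, SetLike.IsHomogeneousElem 𝒜 t → ¬ IsNilpotent t →
      ∀ (ℬ : G → AddSubgroup (Localization (Submonoid.powers t))) [GradedRing ℬ],
        (∀ (g : G) (x : Localization (Submonoid.powers t)), x ∈ ℬ g ↔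
          ∃ (r s : R) (h : G) (hs : s ∈ Submonoid.powers t), r ∈ 𝒜 (g + h) ∧ s ∈ 𝒜 h ∧
            x = Localization.mk r ⟨s, hs⟩) →
        IsGelfandGraded ℬ) : IsPMPlusGraded 𝒜 := by
  intro P Q Q' hP hQ hQ' hPQ hPQ'
  by_contra hcon
  push_neg at hcon
  obtain ⟨h1, h2⟩ := hcon
  obtain ⟨a, b, ha0, hb0, haQ, haQ', hbQ', hbQ⟩ :=
    exists_deg_zero_pair 𝒜 hG hQ hQ' h1 h2
  set t : R := a + b with ht
  have ht0 : t ∈ 𝒜 0 := add_mem ha0 hb0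
  have htQ : t ∉ Q := by
    intro h
    exact hbQ (by simpa [ht] using Ideal.sub_mem _ h haQ)
  have htQ' : t ∉ Q' := by
    intro h
    exact haQ' (by simpa [ht] using Ideal.sub_mem _ h hbQ')
  have htP : t ∉ P := fun h => htQ (hPQ h)
  have htnil : ¬ IsNilpotent t := by
    rintro ⟨n, hn⟩
    rcases Nat.eq_zero_or_pos n with rfl | hpos
    · rw [pow_zero] at hn
      exact hQ.2.1 (Ideal.eq_top_iff_one _ |>.mpr (hn ▸ Q.zero_mem))
    · exact htQ (mem_of_pow_mem 𝒜 hQ ⟨0, ht0⟩ hpos.ne' (hn ▸ Q.zero_mem))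
  have hGel := hC t ⟨0, ht0⟩ htnil (locB 𝒜 t ht0 htnil) (locB_mem_iff 𝒜 t ht0 htnil)
  set F := algebraMap R (Localization (Submonoid.powers t)) with hF
  have hPm := map_isGradedPrime_locB 𝒜 t ht0 htnil hP htP
  have hQm := map_isGradedPrime_locB 𝒜 t ht0 htnil hQ htQ
  have hQ'm := map_isGradedPrime_locB 𝒜 t ht0 htnil hQ' htQ'
  obtain ⟨M, ⟨hM, hPM⟩, huniq⟩ := hGel (P.map F) hPm
  obtain ⟨MQ, hMQ, hQMQ⟩ := exists_gradedMaximal (locB 𝒜 t ht0 htnil) hQm.1 hQm.2.1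
  obtain ⟨MQ', hMQ', hQ'MQ'⟩ := exists_gradedMaximal (locB 𝒜 t ht0 htnil) hQ'm.1 hQ'm.2.1
  have hMQM : MQ = M := huniq MQ ⟨hMQ, le_trans (Ideal.map_mono hPQ) hQMQ⟩
  have hMQ'M : MQ' = M := huniq MQ' ⟨hMQ', le_trans (Ideal.map_mono hPQ') hQ'MQ'⟩
  have haM : F a ∈ M := hMQM ▸ hQMQ (Ideal.mem_map_of_mem F haQ)
  have hbM : F b ∈ M := hMQ'M ▸ hQ'MQ' (Ideal.mem_map_of_mem F hbQ')
  have htM : F t ∈ M := by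
    have h : F t = F a + F b := map_add F a b
    rw [h]
    exact add_mem haM hbM
  have hunit : F t * Localization.mk 1 ⟨t, Submonoid.mem_powers t⟩ = 1 := by
    rw [hF, ← Localization.mk_one_eq_algebraMap, Localization.mk_mul, ← Localization.mk_one,
      Localization.mk_eq_mk_iff, Localization.r_iff_exists]
    exact ⟨1, by simp⟩
  exact hM.2.1 (Ideal.eq_top_iff_one _ |>.mpr (hunit ▸ Ideal.mul_mem_right _ _ htM))

end Final

section Statements

variable {G : Type*} [AddGroup G] [DecidableEq G] {R : Type*} [CommRing R]
variable (𝒜 : G → AddSubgroup R) [GradedRing 𝒜]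

theorem stmt_19 (hG : AddMonoid.IsTorsion G) :
    (IsPMPlusGraded 𝒜 ↔
      ∀ (S : Submonoid R), (∀ s ∈ S, SetLike.IsHomogeneousElem 𝒜 s) →
        ∀ (ℬ : G → AddSubgroup (Localization S)) [GradedRing ℬ],
          (∀ (g : G) (x : Localization S), x ∈ ℬ g ↔
            ∃ (r s : R) (h : G) (hs : s ∈ S), r ∈ 𝒜 (g + h) ∧ s ∈ 𝒜 h ∧
              x = Localization.mk r ⟨s, hs⟩) →
          IsGelfandGraded ℬ) ∧
    (IsPMPlusGraded 𝒜 ↔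
      ∀ t : R, SetLike.IsHomogeneousElem 𝒜 t → ¬ IsNilpotent t →
        ∀ (ℬ : G → AddSubgroup (Localization (Submonoid.powers t))) [GradedRing ℬ],
          (∀ (g : G) (x : Localization (Submonoid.powers t)), x ∈ ℬ g ↔
            ∃ (r s : R) (h : G) (hs : s ∈ Submonoid.powers t), r ∈ 𝒜 (g + h) ∧ s ∈ 𝒜 h ∧
              x = Localization.mk r ⟨s, hs⟩) →
          IsGelfandGraded ℬ) ∧
    (IsPMPlusGraded 𝒜 ↔
      ∀ t : R, SetLike.IsHomogeneousElem 𝒜 t → ¬ IsNilpotent t →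
        NormalSpace { P : GSpec 𝒜 // t ∉ P.1 }) := by
  have hAB : IsPMPlusGraded 𝒜 →
      ∀ (S : Submonoid R), (∀ s ∈ S, SetLike.IsHomogeneousElem 𝒜 s) →
        ∀ (ℬ : G → AddSubgroup (Localization S)) [GradedRing ℬ],
          (∀ (g : G) (x : Localization S), x ∈ ℬ g ↔
            ∃ (r s : R) (h : G) (hs : s ∈ S), r ∈ 𝒜 (g + h) ∧ s ∈ 𝒜 h ∧
              x = Localization.mk r ⟨s, hs⟩) →
          IsGelfandGraded ℬ := by
    intro hA S _ ℬ _ hdesc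
    exact pm_to_gelfand 𝒜 ℬ hdesc hA
  have hBC : (∀ (S : Submonoid R), (∀ s ∈ S, SetLike.IsHomogeneousElem 𝒜 s) →
      ∀ (ℬ : G → AddSubgroup (Localization S)) [GradedRing ℬ],
        (∀ (g : G) (x : Localization S), x ∈ ℬ g ↔
          ∃ (r s : R) (h : G) (hs : s ∈ S), r ∈ 𝒜 (g + h) ∧ s ∈ 𝒜 h ∧
            x = Localization.mk r ⟨s, hs⟩) →
        IsGelfandGraded ℬ) →
      (∀ t : R, SetLike.IsHomogeneousElem 𝒜 t → ¬ IsNilpotent t →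
        ∀ (ℬ : G → AddSubgroup (Localization (Submonoid.powers t))) [GradedRing ℬ],
          (∀ (g : G) (x : Localization (Submonoid.powers t)), x ∈ ℬ g ↔
            ∃ (r s : R) (h : G) (hs : s ∈ Submonoid.powers t), r ∈ 𝒜 (g + h) ∧ s ∈ 𝒜 h ∧
              x = Localization.mk r ⟨s, hs⟩) →
          IsGelfandGraded ℬ) := by
    intro hB t ht _
    refine hB (Submonoid.powers t) ?_
    rintro s ⟨n, rfl⟩
    exact homog_pow 𝒜 ht n
  have hCA : (∀ t : R, SetLike.IsHomogeneousElem 𝒜 t → ¬ IsNilpotent t →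
      ∀ (ℬ : G → AddSubgroup (Localization (Submonoid.powers t))) [GradedRing ℬ],
        (∀ (g : G) (x : Localization (Submonoid.powers t)), x ∈ ℬ g ↔
          ∃ (r s : R) (h : G) (hs : s ∈ Submonoid.powers t), r ∈ 𝒜 (g + h) ∧ s ∈ 𝒜 h ∧
            x = Localization.mk r ⟨s, hs⟩) →
        IsGelfandGraded ℬ) → IsPMPlusGraded 𝒜 := gelfand_to_pm 𝒜 hG
  have hAD : IsPMPlusGraded 𝒜 →
      ∀ t : R, SetLike.IsHomogeneousElem 𝒜 t → ¬ IsNilpotent t →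
        NormalSpace { P : GSpec 𝒜 // t ∉ P.1 } := fun hA t ht hnil =>
    pm_to_normal 𝒜 hA t ht hnil
  have hDA : (∀ t : R, SetLike.IsHomogeneousElem 𝒜 t → ¬ IsNilpotent t →
      NormalSpace { P : GSpec 𝒜 // t ∉ P.1 }) → IsPMPlusGraded 𝒜 := normal_to_pm 𝒜 hG
  exact ⟨⟨hAB, fun hB => hCA (hBC hB)⟩, ⟨fun hA => hBC (hAB hA), hCA⟩, hAD, hDA⟩
end Statements
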